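/- (FDRS is a primal-dual algorithm.) Let γ > 0 and set τ := 1/γ. Suppose the FDRS iterates are generated with λ_k ≡ 1, i.e., z^{k+1} = T(z^k), and for all k ≥ 0 define y^k := −(1/γ)P_{V⊥}(z^k). Then for all k ≥ 0 the following recursion holds: y^{k+1} = P_{V⊥}(y^k − τ x_f^k) and x_f^{k+1} = prox_{γf}(x_f^k − γ∇h(x_f^k) + γ(2y^{k+1} − y^k)). -/

import Mathlib

open scoped RealInnerProductSpace

/-- FDRS is a primal-dual algorithm. -/
theorem fdrs_is_primal_dual
    {H : Type*} [NormedAddCommGroup H] [InnerProductSpace ℝ H] [CompleteSpace H]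
    (V : Submodule ℝ H) [CompleteSpace V]
    (PV : H → H) (hPV : ∀ x, PV x = (V.orthogonalProjectionOnto x : H))
    (f g : H → ℝ) (gradg gradh proxf : H → H)
    (β γ τ : ℝ) (hβ : 0 < β) (hγ : 0 < γ) (hτ : τ = 1 / γ)
    (hfconv : ConvexOn ℝ Set.univ f) (hfcont : Continuous f)
    (hgconv : ConvexOn ℝ Set.univ g)
    (hgdiff : ∀ x, HasGradientAt g (gradg x) x)
    (hglip : LipschitzWith (1 / β).toNNReal gradg)
    (hgradh : ∀ x, gradh x = PV (gradg (PV x)))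
    (hprox : ∀ x, IsMinOn (fun y => f y + (1 / (2 * γ)) * ‖y - x‖ ^ 2) Set.univ (proxf x))
    (T : H → H)
    (hT : ∀ z, T z = (1 / 2 : ℝ) • (z - γ • gradh z)
        + (1 / 2 : ℝ) • ((2 : ℝ) • proxf ((2 : ℝ) • PV (z - γ • gradh z) - (z - γ • gradh z))
            - ((2 : ℝ) • PV (z - γ • gradh z) - (z - γ • gradh z))))
    -- unrelaxed FDRS iterates (λ_k ≡ 1), the shadow sequence, and the dual sequence
    (z : ℕ → H) (hz : ∀ k, z (k + 1) = T (z k))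
    (xf : ℕ → H)
    (hxf : ∀ k, xf k = proxf ((2 : ℝ) • PV (z k - γ • gradh (z k)) - (z k - γ • gradh (z k))))
    (y : ℕ → H)
    (hy : ∀ k, y k = -(γ⁻¹ • (z k - PV (z k)))) :
    ∀ k : ℕ,
      y (k + 1) = (y k - τ • xf k) - PV (y k - τ • xf k) ∧
      xf (k + 1) = proxf (xf k - γ • gradh (xf k) + γ • ((2 : ℝ) • y (k + 1) - y k)) := by

  have hγ' : γ ≠ 0 := ne_of_gt hγ
  have hPsub : ∀ a b, PV (a - b) = PV a - PV b := by
    intro a b; simp [hPV, map_sub]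
  have hPadd : ∀ a b, PV (a + b) = PV a + PV b := by
    intro a b; simp [hPV, map_add]
  have hPsmul : ∀ (c : ℝ) a, PV (c • a) = c • PV a := by
    intro c a; simp [hPV, map_smul]
  have hPneg : ∀ a, PV (-a) = -PV a := by
    intro a; simp [hPV, map_neg]
  have hPP : ∀ a, PV (PV a) = PV a := by
    intro a
    rw [hPV a, hPV]
    exact congrArg Subtype.val
      (V.orthogonalProjectionOnto_mem_subspace_eq_self (V.orthogonalProjectionOnto a))
  have hPG : ∀ x, PV (gradh x) = gradh x := by
    intro x; rw [hgradh]; exact hPP _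
  intro k
  have hzk : z (k + 1) = xf k + (z k - PV (z k)) := by
    rw [hz, hT, ← hxf k]
    have hPw : PV (z k - γ • gradh (z k)) = PV (z k) - γ • gradh (z k) := by
      rw [hPsub, hPsmul, hPG]
    rw [hPw]
    module
  have hPz1 : PV (z (k + 1)) = PV (xf k) := by
    rw [hzk, hPadd, hPsub, hPP]; abel
  have hG1 : gradh (z (k + 1)) = gradh (xf k) := by
    rw [hgradh, hgradh, hPz1]
  constructor
  · rw [hy (k + 1), hy k, hzk, hPadd, hPsub, hPP, hτ, hPsub, hPsmul, hPneg, hPsmul,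
      hPsub, hPP]
    match_scalars <;> (field_simp; try ring)
  · rw [hxf (k + 1)]
    congr 1
    rw [hG1, hzk, hy (k + 1), hy k, hzk]
    simp only [hPsub, hPadd, hPsmul, hPneg, hPP, hPG]
    match_scalars <;> (field_simp; try ring)
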